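/- Let (X, μ) be a measure space, let m > 2 be a real number, let A > 0 and Q ≥ 0 be real numbers, and let u : X → ℝ be a measurable function with ∫ u² dμ = 1 such that |u|^{2m/(m−2)} is integrable and x ↦ u(x)² ln u(x)² is integrable. Assume (∫ |u|^{2m/(m−2)} dμ)^{(m−2)/m} ≤ A · Q. Then for every σ > 0 one has ∫ u² ln u² dμ ≤ σ Q − (m/2) ln σ + (m/2) ln(m/2) + (m/2) ln A − 1. -/

import Mathlib

open MeasureTheory

theorem log_sobolev_from_sobolev {X : Type*} [MeasurableSpace X] (μ : Measure X)
    (m : ℝ) (hm : 2 < m) (A Q : ℝ) (hA : 0 < A) (hQ : 0 ≤ Q)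
    (u : X → ℝ) (hu : Measurable u)
    (hnorm : ∫ x, (u x) ^ 2 ∂μ = 1)
    (hint1 : Integrable (fun x => |u x| ^ (2 * m / (m - 2))) μ)
    (hint2 : Integrable (fun x => (u x) ^ 2 * Real.log ((u x) ^ 2)) μ)
    (hSob : (∫ x, |u x| ^ (2 * m / (m - 2)) ∂μ) ^ ((m - 2) / m) ≤ A * Q) :
    ∀ σ : ℝ, 0 < σ →
      ∫ x, (u x) ^ 2 * Real.log ((u x) ^ 2) ∂μ ≤
        σ * Q - (m / 2) * Real.log σ + (m / 2) * Real.log (m / 2) +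
          (m / 2) * Real.log A - 1 := by
  intro σ hσ
  have hm2 : (0:ℝ) < m - 2 := by linarith
  have hmpos : (0:ℝ) < m := by linarith
  set q : ℝ := 2 * m / (m - 2) with hqdef
  have hqpos : 0 < q := by positivity
  -- u^2 is integrable
  have hu2 : Integrable (fun x => (u x) ^ 2) μ := by
    by_contra h
    rw [integral_undef h] at hnorm
    norm_num at hnorm
  set I : ℝ := ∫ x, |u x| ^ q ∂μ with hIdef
  have hInn : 0 ≤ I := integral_nonneg fun x => by positivity
  have hIpos : 0 < I := by
    rcases hInn.lt_or_eq with h | h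
    · exact h
    · exfalso
      have hz := (integral_eq_zero_iff_of_nonneg (fun x => by positivity) hint1).mp h.symm
      have hz2 : (fun x => (u x) ^ 2) =ᵐ[μ] 0 := by
        filter_upwards [hz] with x hx
        have : |u x| ^ q = 0 := hx
        have : |u x| = 0 := by
          rcases Real.rpow_eq_zero_iff_of_nonneg (abs_nonneg _) |>.mp this with ⟨h1, _⟩
          exact h1
        have hx0 : u x = 0 := abs_eq_zero.mp this
        simp [hx0]
      have : ∫ x, (u x) ^ 2 ∂μ = 0 := by
        rw [integral_congr_ae hz2]; simp
      rw [hnorm] at this; norm_num at this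
  -- pointwise inequality
  have hpt : ∀ x, (u x) ^ 2 * Real.log ((u x) ^ 2) ≤
      ((m - 2) / 2) * (I⁻¹ * |u x| ^ q - (u x) ^ 2 - (u x) ^ 2 * Real.log I⁻¹) := by
    intro x
    rcases eq_or_ne (u x) 0 with h0 | h0
    · simp [h0, Real.zero_rpow (ne_of_gt hqpos)]
    · set t := u x with ht
      have ht2 : (0:ℝ) < t ^ 2 := by positivity
      set s : ℝ := (t ^ 2) ^ (2 / (m - 2)) with hsdef
      have hs : 0 < s := Real.rpow_pos_of_pos ht2 _
      have key : Real.log (I⁻¹ * s) ≤ I⁻¹ * s - 1 :=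
        Real.log_le_sub_one_of_pos (by positivity)
      rw [Real.log_mul (by positivity) (ne_of_gt hs)] at key
      have hlogs : Real.log s = (2 / (m - 2)) * Real.log (t ^ 2) :=
        Real.log_rpow ht2 _
      have hst : s * t ^ 2 = |t| ^ q := by
        have habs : t ^ 2 = |t| ^ (2:ℝ) := by
          rw [show ((2:ℝ)) = ((2:ℕ):ℝ) by norm_num, Real.rpow_natCast, sq_abs]
        calc s * t ^ 2 = (|t| ^ (2:ℝ)) ^ (2 / (m - 2)) * |t| ^ (2:ℝ) := by
              rw [hsdef, habs]
          _ = |t| ^ ((2:ℝ) * (2 / (m - 2))) * |t| ^ (2:ℝ) := by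
              rw [← Real.rpow_mul (abs_nonneg t)]
          _ = |t| ^ ((2:ℝ) * (2 / (m - 2)) + 2) := by
              rw [← Real.rpow_add (abs_pos.mpr h0)]
          _ = |t| ^ q := by
              congr 1
              rw [hqdef]
              field_simp
              ring
      -- from key: log s ≤ I⁻¹ * s - 1 - log I⁻¹
      have key2 : Real.log s ≤ I⁻¹ * s - 1 - Real.log I⁻¹ := by linarith
      have hmul := mul_le_mul_of_nonneg_left key2 (le_of_lt ht2)
      -- t^2 * log s = (2/(m-2)) * (t^2 * log (t^2))
      have h1 : t ^ 2 * Real.log s = (2 / (m - 2)) * (t ^ 2 * Real.log (t ^ 2)) := by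
        rw [hlogs]; ring
      have h2 : t ^ 2 * (I⁻¹ * s - 1 - Real.log I⁻¹)
          = I⁻¹ * |t| ^ q - t ^ 2 - t ^ 2 * Real.log I⁻¹ := by
        rw [← hst]; ring
      rw [h1, h2] at hmul
      have := mul_le_mul_of_nonneg_left hmul (le_of_lt (by positivity : (0:ℝ) < (m - 2) / 2))
      calc t ^ 2 * Real.log (t ^ 2)
          = (m - 2) / 2 * (2 / (m - 2) * (t ^ 2 * Real.log (t ^ 2))) := by
            field_simp
        _ ≤ (m - 2) / 2 * (I⁻¹ * |t| ^ q - t ^ 2 - t ^ 2 * Real.log I⁻¹) := this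
  -- integrate
  have hRHSint : Integrable (fun x =>
      ((m - 2) / 2) * (I⁻¹ * |u x| ^ q - (u x) ^ 2 - (u x) ^ 2 * Real.log I⁻¹)) μ := by
    apply Integrable.const_mul
    exact ((hint1.const_mul I⁻¹).sub hu2).sub (hu2.mul_const _)
  have hmono := integral_mono hint2 hRHSint hpt
  have hRHSval : ∫ x, ((m - 2) / 2) * (I⁻¹ * |u x| ^ q - (u x) ^ 2
      - (u x) ^ 2 * Real.log I⁻¹) ∂μ = ((m - 2) / 2) * Real.log I := by
    rw [integral_const_mul]
    congr 1
    have hfe : (fun x => I⁻¹ * |u x| ^ q - (u x) ^ 2 - (u x) ^ 2 * Real.log I⁻¹)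
        = fun x => I⁻¹ * |u x| ^ q - (1 + Real.log I⁻¹) * (u x) ^ 2 := by
      funext x; ring
    rw [hfe, integral_sub (hint1.const_mul I⁻¹) (hu2.const_mul _),
        integral_const_mul, integral_const_mul, hnorm, ← hIdef,
        inv_mul_cancel₀ (ne_of_gt hIpos), Real.log_inv]
    ring
  rw [hRHSval] at hmono
  -- now ((m-2)/2) log I ≤ (m/2) log (A*Q)
  have hAQ : 0 < A * Q := lt_of_lt_of_le (Real.rpow_pos_of_pos hIpos _) hSob
  have hQpos : 0 < Q := by nlinarith
  have hlog1 : ((m - 2) / 2) * Real.log I = (m / 2) * Real.log (I ^ ((m - 2) / m)) := by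
    rw [Real.log_rpow hIpos]
    field_simp
  have hchain : ((m - 2) / 2) * Real.log I ≤ (m / 2) * (Real.log A + Real.log Q) := by
    rw [hlog1]
    apply mul_le_mul_of_nonneg_left _ (by positivity : (0:ℝ) ≤ m / 2)
    rw [← Real.log_mul (ne_of_gt hA) (ne_of_gt hQpos)]
    exact Real.log_le_log (Real.rpow_pos_of_pos hIpos _) hSob
  have hlogQ : Real.log Q ≤ (2 * σ / m) * Q - 1 - Real.log (2 * σ / m) := by
    have h := Real.log_le_sub_one_of_pos (show 0 < (2 * σ / m) * Q by positivity)
    rw [Real.log_mul (by positivity) (ne_of_gt hQpos)] at h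
    linarith
  have hlogdiv : Real.log (2 * σ / m) = Real.log σ - Real.log (m / 2) := by
    rw [show 2 * σ / m = σ / (m / 2) by field_simp,
        Real.log_div (ne_of_gt hσ) (by positivity)]
  have hmul2 := mul_le_mul_of_nonneg_left hlogQ (by positivity : (0:ℝ) ≤ m / 2)
  have hexp : (m / 2) * ((2 * σ / m) * Q - 1 - Real.log (2 * σ / m))
      = σ * Q - m / 2 - (m / 2) * (Real.log σ - Real.log (m / 2)) := by
    rw [hlogdiv]
    field_simp
  have heq : (m / 2) * (Real.log A + Real.log Q)
      = (m / 2) * Real.log A + (m / 2) * Real.log Q := by ring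
  rw [hexp] at hmul2
  have hm1 : (1:ℝ) ≤ m / 2 := by linarith
  linarith
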